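/- Let p ∈ R^n be a constant vector and P an R^n-valued random vector such that for all h ∈ R^n: if h · p ≤ 0 and h · P ≥ 0 almost surely, then h · p = 0 and h · P = 0 almost surely. Then there exists a bounded random variable Y with Y > 0 almost surely and a constant y > 0 such that E[P Y] = y p; equivalently (after normalization) E[P Y] = p. -/

import Mathlib

open MeasureTheory

noncomputable section

/-- Euclidean dot product on `Fin n → ℝ`. -/
def dotp {n : ℕ} (a b : Fin n → ℝ) : ℝ := ∑ i, a i * b i

lemma dotp_add_left {n : ℕ} (x y v : Fin n → ℝ) : dotp (x+y) v = dotp x v + dotp y v := by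
  simp [dotp, add_mul, Finset.sum_add_distrib]

lemma dotp_smul_left {n : ℕ} (t : ℝ) (x v : Fin n → ℝ) : dotp (t • x) v = t * dotp x v := by
  simp [dotp, Finset.mul_sum, mul_assoc]

lemma dotp_sub_left {n : ℕ} (x y v : Fin n → ℝ) : dotp (x-y) v = dotp x v - dotp y v := by
  simp [dotp, sub_mul, Finset.sum_sub_distrib]

lemma dotp_neg_left {n : ℕ} (x v : Fin n → ℝ) : dotp (-x) v = - dotp x v := by
  simp [dotp]

lemma dotp_zero_left {n : ℕ} (v : Fin n → ℝ) : dotp 0 v = 0 := by simp [dotp]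

lemma dotp_single {n : ℕ} (i : Fin n) (v : Fin n → ℝ) : dotp ((Pi.single i 1 : Fin n → ℝ)) v = v i := by
  rw [dotp, Finset.sum_eq_single i] <;> simp +contextual [Pi.single_apply]

lemma dotp_le {n : ℕ} (h v : Fin n → ℝ) : dotp h v ≤ n * ‖h‖ * ‖v‖ := by
  calc dotp h v ≤ ∑ i : Fin n, |h i * v i| := Finset.sum_le_sum fun i _ => le_abs_self _
    _ ≤ ∑ _i : Fin n, ‖h‖ * ‖v‖ := Finset.sum_le_sum fun i _ => by
        rw [abs_mul]
        exact mul_le_mul (norm_le_pi_norm h i) (norm_le_pi_norm v i) (abs_nonneg _) (norm_nonneg _)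
    _ = n * ‖h‖ * ‖v‖ := by simp [Finset.sum_const, nsmul_eq_mul, mul_assoc]

lemma quad_bound (a r : ℝ) : a * r - r^2 ≤ a^2/4 := by nlinarith [sq_nonneg (a - 2*r)]

set_option maxHeartbeats 1000000 in
/-- one-period numéraire-free fundamental theorem of asset pricing.
If no `h` with `h ⬝ p ≤ 0 ≤ h ⬝ P` except degenerately, then there is a bounded
strictly positive deflator `Y` with `E[P Y] = p`. -/
theorem stmt5 {Ω : Type*} [MeasurableSpace Ω] (μ : Measure Ω) [IsProbabilityMeasure μ]
    {n : ℕ} (p : Fin n → ℝ) (P : Ω → Fin n → ℝ) (hP : Measurable P)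
    (hNA : ∀ h : Fin n → ℝ, dotp h p ≤ 0 → (∀ᵐ ω ∂μ, 0 ≤ dotp h (P ω)) →
      dotp h p = 0 ∧ ∀ᵐ ω ∂μ, dotp h (P ω) = 0) :
    ∃ Y : Ω → ℝ, Measurable Y ∧ (∃ Cb : ℝ, ∀ ω, |Y ω| ≤ Cb) ∧
      (∀ᵐ ω ∂μ, 0 < Y ω) ∧
      (∀ i, Integrable (fun ω => P ω i * Y ω) μ) ∧
      (∀ i, ∫ ω, P ω i * Y ω ∂μ = p i) := by
  classical
  -- basic measurability
  have mdot : ∀ h : Fin n → ℝ, Measurable fun ω => dotp h (P ω) := fun h => by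
    simpa [dotp] using Finset.measurable_sum Finset.univ
      (fun i _ => measurable_const.mul ((measurable_pi_apply i).comp hP))
  have mnorm : Measurable fun ω => ‖P ω‖ := hP.norm
  -- the weighted exponential integrand
  set g : (Fin n → ℝ) → Ω → ℝ := fun h ω => Real.exp (dotp h (P ω) - ‖P ω‖^2) with hgdef
  have gpos : ∀ h ω, 0 < g h ω := fun h ω => Real.exp_pos _
  have gmeas : ∀ h, Measurable (g h) := fun h =>
    Real.measurable_exp.comp ((mdot h).sub (mnorm.pow_const 2))
  have gbd : ∀ h ω, g h ω ≤ Real.exp ((n * ‖h‖)^2/4) := by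
    intro h ω
    apply Real.exp_le_exp.2
    calc dotp h (P ω) - ‖P ω‖^2 ≤ n * ‖h‖ * ‖P ω‖ - ‖P ω‖^2 := by
          have := dotp_le h (P ω); linarith
      _ ≤ (n * ‖h‖)^2/4 := quad_bound _ _
  have gint : ∀ h, Integrable (g h) μ := fun h =>
    ⟨(gmeas h).aestronglyMeasurable, HasFiniteIntegral.of_bounded
      (C := Real.exp ((n * ‖h‖)^2/4))
      (Filter.Eventually.of_forall fun ω => by
        rw [Real.norm_eq_abs, abs_of_pos (gpos h ω)]; exact gbd h ω)⟩
  -- the convex functional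
  set f : (Fin n → ℝ) → ℝ := fun h => Real.exp (-(dotp h p)) + ∫ ω, g h ω ∂μ with hfdef
  have fge1 : ∀ h, Real.exp (-(dotp h p)) ≤ f h := fun h =>
    le_add_of_nonneg_right (integral_nonneg fun ω => (gpos h ω).le)
  have f0pos : (1:ℝ) ≤ f 0 := by
    have := fge1 0; rw [dotp_zero_left] at this; simpa using this
  -- convexity
  have fconv : ConvexOn ℝ Set.univ f := by
    refine ⟨convex_univ, fun x _ y _ a b ha hb hab => ?_⟩
    have h1 : Real.exp (-(dotp (a • x + b • y) p)) ≤
        a * Real.exp (-(dotp x p)) + b * Real.exp (-(dotp y p)) := by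
      have hc := convexOn_exp.2 (Set.mem_univ (-(dotp x p))) (Set.mem_univ (-(dotp y p))) ha hb hab
      have e : -(dotp (a • x + b • y) p) = a • -(dotp x p) + b • -(dotp y p) := by
        rw [dotp_add_left, dotp_smul_left, dotp_smul_left]; simp [smul_eq_mul]; ring
      rw [e]; simpa [smul_eq_mul] using hc
    have h2 : ∀ ω, g (a • x + b • y) ω ≤ a * g x ω + b * g y ω := by
      intro ω
      have hc := convexOn_exp.2 (Set.mem_univ (dotp x (P ω) - ‖P ω‖^2))
        (Set.mem_univ (dotp y (P ω) - ‖P ω‖^2)) ha hb hab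
      have e : dotp (a • x + b • y) (P ω) - ‖P ω‖^2 =
          a • (dotp x (P ω) - ‖P ω‖^2) + b • (dotp y (P ω) - ‖P ω‖^2) := by
        rw [dotp_add_left, dotp_smul_left, dotp_smul_left]; simp only [smul_eq_mul]
        rw [show b = 1 - a from by linarith]; ring
      show Real.exp _ ≤ _
      rw [e]; simpa [smul_eq_mul] using hc
    have h3 : ∫ ω, g (a • x + b • y) ω ∂μ ≤ a * ∫ ω, g x ω ∂μ + b * ∫ ω, g y ω ∂μ := by
      have := integral_mono (gint _) (((gint x).const_mul a).add ((gint y).const_mul b)) h2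
      simp only [Pi.add_apply] at this
      rwa [integral_add ((gint x).const_mul a) ((gint y).const_mul b),
        integral_const_mul, integral_const_mul] at this
    show Real.exp _ + _ ≤ _
    simp only [smul_eq_mul]
    calc Real.exp (-(dotp (a • x + b • y) p)) + ∫ ω, g (a • x + b • y) ω ∂μ ≤
        (a * Real.exp (-(dotp x p)) + b * Real.exp (-(dotp y p))) +
          (a * ∫ ω, g x ω ∂μ + b * ∫ ω, g y ω ∂μ) := add_le_add h1 h3
      _ = a * f x + b * f y := by simp only [hfdef]; ring
  -- continuity
  have fcont : Continuous f := by
    have c1 : ∀ v : Fin n → ℝ, Continuous fun h : Fin n → ℝ => dotp h v := by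
      intro v
      simpa [dotp] using continuous_finset_sum Finset.univ
        (fun i _ => ((continuous_apply i).mul continuous_const : Continuous fun h : Fin n → ℝ => h i * v i))
    refine (Real.continuous_exp.comp (c1 p).neg).add ?_
    rw [continuous_iff_continuousAt]
    intro h₀
    apply continuousAt_of_dominated (bound := fun _ => Real.exp ((n*(‖h₀‖+1))^2/4))
    · exact Filter.Eventually.of_forall fun h => (gmeas h).aestronglyMeasurable
    · filter_upwards [Metric.ball_mem_nhds h₀ one_pos] with h hh
      refine Filter.Eventually.of_forall fun ω => ?_
      rw [Real.norm_eq_abs, abs_of_pos (gpos h ω)]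
      refine (gbd h ω).trans (Real.exp_le_exp.2 ?_)
      have hnm : ‖h‖ ≤ ‖h₀‖ + 1 := by
        have h1 := norm_sub_norm_le h h₀
        have h2 := mem_ball_iff_norm.1 hh
        linarith
      have hn0 : (0:ℝ) ≤ n * ‖h‖ := by positivity
      gcongr (?_)^2/4
      exact mul_le_mul_of_nonneg_left hnm (by positivity)
    · exact integrable_const _
    · refine Filter.Eventually.of_forall fun ω => ?_
      exact (Real.continuous_exp.comp ((c1 (P ω)).sub continuous_const)).continuousAt
  -- the degenerate subspace L
  set L : Submodule ℝ (Fin n → ℝ) :=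
    { carrier := {h | dotp h p = 0 ∧ ∀ᵐ ω ∂μ, dotp h (P ω) = 0}
      add_mem' := fun {a b} ha hb => ⟨by rw [dotp_add_left, ha.1, hb.1, add_zero],
        by filter_upwards [ha.2, hb.2] with ω h1 h2; rw [dotp_add_left, h1, h2, add_zero]⟩
      zero_mem' := ⟨dotp_zero_left p, Filter.Eventually.of_forall fun ω => dotp_zero_left _⟩
      smul_mem' := fun c {x} hx => ⟨by rw [dotp_smul_left, hx.1, mul_zero],
        by filter_upwards [hx.2] with ω h1; rw [dotp_smul_left, h1, mul_zero]⟩ } with hLdef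
  have memL : ∀ h : Fin n → ℝ, h ∈ L ↔ dotp h p = 0 ∧ ∀ᵐ ω ∂μ, dotp h (P ω) = 0 := fun h => Iff.rfl
  -- f is invariant under translation by L
  have finv : ∀ h h' : Fin n → ℝ, h - h' ∈ L → f h = f h' := by
    intro h h' hm
    rw [memL] at hm
    have e1 : dotp h p = dotp h' p := by
      have := hm.1; rw [dotp_sub_left] at this; linarith
    have e2 : ∫ ω, g h ω ∂μ = ∫ ω, g h' ω ∂μ := by
      apply integral_congr_ae
      filter_upwards [hm.2] with ω hω
      have : dotp h (P ω) = dotp h' (P ω) := by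
        rw [dotp_sub_left] at hω; linarith
      simp only [hgdef, this]
    simp only [hfdef, e1, e2]
  -- complement of L
  obtain ⟨W, hLW⟩ := Submodule.exists_isCompl L
  have hWL : IsCompl W L := hLW.symm
  have hproj : ∀ h : Fin n → ℝ, h - (W.linearProjOfIsCompl L hWL h : Fin n → ℝ) ∈ L := by
    intro h
    have e := Submodule.projection_add_projection_eq_self hWL h
    have e2 : h - (W.linearProjOfIsCompl L hWL h : Fin n → ℝ) =
        (L.linearProjOfIsCompl W hWL.symm h : Fin n → ℝ) :=
      sub_eq_of_eq_add' e.symm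
    rw [e2]; exact Submodule.coe_mem _
  -- every unit vector of W gives divergence along its ray
  have hray : ∀ u : Fin n → ℝ, u ∈ W → ‖u‖ = 1 → ∃ k : ℕ, f 0 < f (((k:ℝ)+1) • u) := by
    intro u hu hnorm
    have hunotL : u ∉ L := by
      intro hL
      have h0 : u ∈ L ⊓ W := ⟨hL, hu⟩
      rw [hLW.inf_eq_bot] at h0
      rw [Submodule.mem_bot] at h0
      rw [h0] at hnorm; simp at hnorm
    have key : ¬ (0 ≤ dotp u p ∧ ∀ᵐ ω ∂μ, dotp u (P ω) ≤ 0) := by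
      rintro ⟨h1, h2⟩
      have hna := hNA (-u) (by rw [dotp_neg_left]; linarith)
        (by filter_upwards [h2] with ω hω; rw [dotp_neg_left]; linarith)
      refine hunotL ⟨?_, ?_⟩
      · have := hna.1; rw [dotp_neg_left, neg_eq_zero] at this; exact this
      · filter_upwards [hna.2] with ω hω
        rw [dotp_neg_left, neg_eq_zero] at hω; exact hω
    by_cases hup : 0 ≤ dotp u p
    · -- then the payoff must be positive with positive probability
      have hae : ¬ ∀ᵐ ω ∂μ, dotp u (P ω) ≤ 0 := fun hc => key ⟨hup, hc⟩
      have hApos : μ {ω | 0 < dotp u (P ω)} ≠ 0 := by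
        intro hc
        apply hae
        rw [ae_iff]
        convert hc using 2
        ext ω; simp [not_le]
      -- find a slab of positive measure
      set A : ℕ → Set Ω := fun k => {ω | 1/((k:ℝ)+1) ≤ dotp u (P ω) ∧ ‖P ω‖ ≤ (k:ℝ)} with hAdef
      have hcover : {ω | 0 < dotp u (P ω)} ⊆ ⋃ k, A k := by
        intro ω hω
        simp only [Set.mem_setOf_eq] at hω
        obtain ⟨k1, hk1⟩ := exists_nat_gt (1 / dotp u (P ω))
        obtain ⟨k2, hk2⟩ := exists_nat_gt (‖P ω‖)
        have hc1 : (0:ℝ) ≤ (k1:ℝ) := Nat.cast_nonneg _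
        have hc2 : (0:ℝ) ≤ (k2:ℝ) := Nat.cast_nonneg _
        have h1 : 1 < (k1:ℝ) * dotp u (P ω) := by
          rw [div_lt_iff₀ hω] at hk1; linarith
        refine Set.mem_iUnion.2 ⟨k1 + k2, ⟨?_, ?_⟩⟩
        · show 1/(((k1 + k2 : ℕ):ℝ)+1) ≤ dotp u (P ω)
          push_cast
          rw [div_le_iff₀ (by positivity)]
          nlinarith [mul_nonneg hc2 hω.le]
        · show ‖P ω‖ ≤ ((k1 + k2 : ℕ):ℝ)
          push_cast
          linarith
      obtain ⟨k₀, hk₀⟩ : ∃ k, μ (A k) ≠ 0 := by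
        by_contra hc
        push_neg at hc
        exact hApos (measure_mono_null hcover (measure_iUnion_null hc))
      have hAmeas : MeasurableSet (A k₀) :=
        ((measurableSet_le measurable_const (mdot u)).inter
          (measurableSet_le mnorm measurable_const))
      set m : ℝ := (μ (A k₀)).toReal with hmdef
      have hmpos : 0 < m := ENNReal.toReal_pos hk₀ (measure_ne_top μ _)
      set δ : ℝ := 1/((k₀:ℝ)+1) with hδdef
      have hδpos : 0 < δ := by positivity
      set M : ℝ := (k₀:ℝ) with hMdef
      -- lower bound for f (t • u) for t ≥ 0
      have hlow : ∀ t : ℝ, 0 ≤ t → Real.exp (t*δ - M^2) * m ≤ f (t • u) := by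
        intro t ht
        have hind : ∀ ω, (A k₀).indicator (fun _ => Real.exp (t*δ - M^2)) ω ≤ g (t • u) ω := by
          intro ω
          by_cases hω : ω ∈ A k₀
          · rw [Set.indicator_of_mem hω]
            refine Real.exp_le_exp.2 ?_
            obtain ⟨hω1, hω2⟩ := hω
            rw [dotp_smul_left]
            have h1 : t * δ ≤ t * dotp u (P ω) := mul_le_mul_of_nonneg_left hω1 ht
            have h2 : ‖P ω‖^2 ≤ M^2 := by
              have := norm_nonneg (P ω); nlinarith
            linarith
          · rw [Set.indicator_of_notMem hω]; exact (gpos _ ω).le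
        have hii : Integrable ((A k₀).indicator (fun _ => Real.exp (t*δ - M^2))) μ :=
          (integrable_const _).indicator hAmeas
        have hmono := integral_mono hii (gint _) hind
        rw [integral_indicator_const _ hAmeas, smul_eq_mul, measureReal_def] at hmono
        have e3 : (μ (A k₀)).toReal * Real.exp (t*δ - M^2) = Real.exp (t*δ - M^2) * m := by
          rw [hmdef]; ring
        rw [e3] at hmono
        exact hmono.trans (le_add_of_nonneg_left (Real.exp_pos _).le)
      -- choose t large enough
      set t₀ : ℝ := (Real.log ((f 0 + 1)/m) + M^2)/δ with ht₀def
      obtain ⟨k, hk⟩ := exists_nat_gt t₀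
      refine ⟨k, ?_⟩
      have hkpos : (0:ℝ) ≤ (k:ℝ)+1 := by positivity
      have hexp : f 0 + 1 ≤ Real.exp (((k:ℝ)+1)*δ - M^2) * m := by
        have hlog : Real.log ((f 0 + 1)/m) + M^2 ≤ ((k:ℝ)+1)*δ := by
          have ht₀ : t₀ ≤ (k:ℝ)+1 := by linarith
          calc Real.log ((f 0 + 1)/m) + M^2 = t₀ * δ := by
                rw [ht₀def]; field_simp
            _ ≤ ((k:ℝ)+1)*δ := mul_le_mul_of_nonneg_right ht₀ hδpos.le
        have h1 : Real.log ((f 0 + 1)/m) ≤ ((k:ℝ)+1)*δ - M^2 := by linarith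
        have h2 : (f 0 + 1)/m ≤ Real.exp (((k:ℝ)+1)*δ - M^2) := by
          rw [← Real.exp_log (show (0:ℝ) < (f 0 + 1)/m by positivity)]
          exact Real.exp_le_exp.2 h1
        calc f 0 + 1 = ((f 0 + 1)/m) * m := by field_simp
          _ ≤ Real.exp (((k:ℝ)+1)*δ - M^2) * m := mul_le_mul_of_nonneg_right h2 hmpos.le
      have := hlow ((k:ℝ)+1) hkpos
      linarith
    · -- dotp u p < 0 : the first term diverges
      push_neg at hup
      set c : ℝ := -(dotp u p) with hcdef
      have hcpos : 0 < c := by simp [hcdef]; linarith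
      set t₀ : ℝ := Real.log (f 0 + 1)/c with ht₀def
      obtain ⟨k, hk⟩ := exists_nat_gt t₀
      refine ⟨k, ?_⟩
      have hexp : f 0 + 1 ≤ Real.exp (((k:ℝ)+1)*c) := by
        have hlog : Real.log (f 0 + 1) ≤ ((k:ℝ)+1)*c := by
          have ht₀ : t₀ ≤ (k:ℝ)+1 := by linarith
          calc Real.log (f 0 + 1) = t₀ * c := by rw [ht₀def]; field_simp
            _ ≤ ((k:ℝ)+1)*c := mul_le_mul_of_nonneg_right ht₀ hcpos.le
        rw [← Real.exp_log (show (0:ℝ) < f 0 + 1 by linarith)]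
        exact Real.exp_le_exp.2 hlog
      have h1 := fge1 (((k:ℝ)+1) • u)
      rw [dotp_smul_left] at h1
      have e : -(((k:ℝ)+1) * dotp u p) = ((k:ℝ)+1)*c := by rw [hcdef]; ring
      rw [e] at h1
      linarith
  -- propagation along rays by convexity
  have hprop : ∀ (u : Fin n → ℝ) (s t : ℝ), 0 < s → s ≤ t → f 0 < f (s • u) → f 0 < f (t • u) := by
    intro u s t hs hst hlt
    have ht : 0 < t := hs.trans_le hst
    have hb : (0:ℝ) ≤ s / t := by positivity
    have ha : (0:ℝ) ≤ 1 - s / t := by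
      have : s / t ≤ 1 := (div_le_one ht).2 hst
      linarith
    have hsum : (1 - s/t) + s/t = 1 := by ring
    have hcv := fconv.2 (Set.mem_univ (0 : Fin n → ℝ)) (Set.mem_univ (t • u)) ha hb hsum
    have harg : (1 - s/t) • (0:Fin n → ℝ) + (s/t) • (t • u) = s • u := by
      rw [smul_zero, zero_add, smul_smul, div_mul_cancel₀ _ ht.ne']
    rw [harg] at hcv
    simp only [smul_eq_mul] at hcv
    by_contra hc2
    push_neg at hc2
    have h4 := mul_le_mul_of_nonneg_left hc2 hb
    have h5 : f (s • u) ≤ f 0 := by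
      calc f (s • u) ≤ (1 - s/t) * f 0 + s/t * f (t • u) := hcv
        _ ≤ (1 - s/t) * f 0 + s/t * f 0 := by linarith
        _ = f 0 := by ring
    linarith
  -- compactness: a uniform radius beyond which f exceeds f 0 on W
  set U : ℕ → Set (Fin n → ℝ) := fun k => {u | f 0 < f (((k:ℝ)+1) • u)} with hUdef
  have hUopen : ∀ k : ℕ, IsOpen (U k) := by
    intro k
    exact isOpen_lt continuous_const (fcont.comp (continuous_const_smul ((k:ℝ)+1)))
  have hScompact : IsCompact (Metric.sphere (0:Fin n → ℝ) 1 ∩ (W : Set (Fin n → ℝ))) :=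
    (isCompact_sphere 0 1).inter_right (Submodule.closed_of_finiteDimensional W)
  have hScover : Metric.sphere (0:Fin n → ℝ) 1 ∩ (W : Set (Fin n → ℝ)) ⊆ ⋃ k, U k := by
    rintro u ⟨hs, hw⟩
    obtain ⟨k, hk⟩ := hray u hw (by simpa using hs)
    exact Set.mem_iUnion.2 ⟨k, hk⟩
  obtain ⟨F, hF⟩ := hScompact.elim_finite_subcover U hUopen hScover
  set N : ℝ := ((F.sup id : ℕ) : ℝ) + 1 with hNdef
  have hNpos : (1:ℝ) ≤ N := by
    rw [hNdef]
    have : (0:ℝ) ≤ ((F.sup id : ℕ) : ℝ) := Nat.cast_nonneg _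
    linarith
  have hout : ∀ h : Fin n → ℝ, h ∈ W → N ≤ ‖h‖ → f 0 < f h := by
    intro h hW hN
    have hh0 : h ≠ 0 := by
      intro e; rw [e, norm_zero] at hN; linarith
    have hnpos : 0 < ‖h‖ := norm_pos_iff.2 hh0
    set u : Fin n → ℝ := ‖h‖⁻¹ • h with hudef
    have hus : u ∈ Metric.sphere (0:Fin n → ℝ) 1 ∩ (W : Set (Fin n → ℝ)) := by
      constructor
      · simp only [mem_sphere_iff_norm, sub_zero, hudef, norm_smul, norm_inv, norm_norm]
        field_simp
      · exact W.smul_mem _ hW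
    obtain ⟨k, hkF, hk⟩ := Set.mem_iUnion₂.1 (hF hus)
    have hk' : f 0 < f (((k:ℝ)+1) • u) := hk
    have hkN : ((k:ℝ)+1) ≤ N := by
      have := Finset.le_sup (f := id) hkF
      rw [hNdef]
      have : (k:ℝ) ≤ ((F.sup id : ℕ) : ℝ) := by exact_mod_cast this
      linarith
    have := hprop u ((k:ℝ)+1) ‖h‖ (by positivity) (le_trans hkN hN) hk'
    rwa [hudef, smul_smul, mul_inv_cancel₀ hnpos.ne', one_smul] at this
  -- minimize f on the compact K
  set K : Set (Fin n → ℝ) := Metric.closedBall 0 N ∩ (W : Set (Fin n → ℝ)) with hKdef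
  have hKc : IsCompact K := (isCompact_closedBall 0 N).inter_right
    (Submodule.closed_of_finiteDimensional W)
  have h0K : (0:Fin n → ℝ) ∈ K := ⟨Metric.mem_closedBall.2 (by simp; linarith), W.zero_mem⟩
  obtain ⟨hstar, hstarK, hmin⟩ := hKc.exists_isMinOn ⟨0, h0K⟩ fcont.continuousOn
  -- hstar is a global minimum
  have hglobal : ∀ h, f hstar ≤ f h := by
    intro h
    set h' : Fin n → ℝ := (W.linearProjOfIsCompl L hWL h : Fin n → ℝ) with hh'def
    have e : f h = f h' := finv h h' (hproj h)
    rcases le_or_gt ‖h'‖ N with hle | hgt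
    · rw [e]
      exact isMinOn_iff.1 hmin h'
        ⟨Metric.mem_closedBall.2 (by simpa using hle), Submodule.coe_mem _⟩
    · have h1 := hout h' (Submodule.coe_mem _) hgt.le
      have h2 : f hstar ≤ f 0 := isMinOn_iff.1 hmin 0 h0K
      linarith
  -- differentiate under the integral at the minimum
  have hkey : ∀ i : Fin n,
      Integrable (fun ω => P ω i * Real.exp (dotp hstar (P ω) - ‖P ω‖^2)) μ ∧
      ∫ ω, P ω i * Real.exp (dotp hstar (P ω) - ‖P ω‖^2) ∂μ =
        p i * Real.exp (-(dotp hstar p)) := by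
    intro i
    set Fc : ℝ → Ω → ℝ := fun t ω => Real.exp (dotp hstar (P ω) - ‖P ω‖^2 + t * P ω i) with hFcdef
    set Fc' : ℝ → Ω → ℝ :=
      fun t ω => P ω i * Real.exp (dotp hstar (P ω) - ‖P ω‖^2 + t * P ω i) with hFc'def
    have hFg : ∀ t, Fc t = g (hstar + t • (Pi.single i 1 : Fin n → ℝ)) := by
      intro t; funext ω
      show Real.exp (dotp hstar (P ω) - ‖P ω‖^2 + t * P ω i) =
        Real.exp (dotp (hstar + t • (Pi.single i 1 : Fin n → ℝ)) (P ω) - ‖P ω‖^2)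
      rw [dotp_add_left, dotp_smul_left, dotp_single]
      ring_nf
    set C2 : ℝ := Real.exp ((n*‖hstar‖+2)^2/4) with hC2def
    have hbd : ∀ ω, ∀ t ∈ Metric.ball (0:ℝ) 1, ‖Fc' t ω‖ ≤ C2 := by
      intro ω t ht
      rw [Real.norm_eq_abs, hFc'def]
      set r : ℝ := ‖P ω‖ with hrdef
      have hr0 : 0 ≤ r := norm_nonneg _
      have hPir : |P ω i| ≤ r := norm_le_pi_norm (P ω) i
      have htabs : |t| ≤ 1 := by
        have := mem_ball_iff_norm.1 ht
        rw [sub_zero, Real.norm_eq_abs] at this; linarith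
      have hrexp : r ≤ Real.exp r := by
        have := Real.add_one_le_exp r; linarith
      have hE : dotp hstar (P ω) - ‖P ω‖^2 + t * P ω i ≤ n*‖hstar‖*r - r^2 + r := by
        have h1 := dotp_le hstar (P ω)
        have h2 : t * P ω i ≤ r := by
          calc t * P ω i ≤ |t * P ω i| := le_abs_self _
            _ = |t| * |P ω i| := abs_mul _ _
            _ ≤ 1 * r := mul_le_mul htabs hPir (abs_nonneg _) zero_le_one
            _ = r := one_mul r
        simp only [← hrdef] at h1 ⊢
        linarith
      rw [abs_mul, abs_of_pos (Real.exp_pos _)]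
      calc |P ω i| * Real.exp (dotp hstar (P ω) - ‖P ω‖^2 + t * P ω i)
          ≤ Real.exp r * Real.exp (n*‖hstar‖*r - r^2 + r) := by
            apply mul_le_mul (hPir.trans hrexp) (Real.exp_le_exp.2 hE)
              (Real.exp_pos _).le (Real.exp_pos _).le
        _ = Real.exp ((n*‖hstar‖+2)*r - r^2) := by
            rw [← Real.exp_add]; congr 1; ring
        _ ≤ C2 := Real.exp_le_exp.2 (quad_bound _ _)
    have hdiff : ∀ ω, ∀ t ∈ Metric.ball (0:ℝ) 1, HasDerivAt (fun s => Fc s ω) (Fc' t ω) t := by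
      intro ω t _
      have h1 : HasDerivAt (fun s : ℝ => dotp hstar (P ω) - ‖P ω‖^2 + s * P ω i) (P ω i) t := by
        simpa using ((hasDerivAt_id t).mul_const (P ω i)).const_add
          (dotp hstar (P ω) - ‖P ω‖^2)
      have := h1.exp
      simpa [hFcdef, hFc'def, mul_comm] using this
    have hres := hasDerivAt_integral_of_dominated_loc_of_deriv_le (μ := μ)
      (F := Fc) (F' := Fc') (x₀ := (0:ℝ)) (s := Metric.ball 0 1) (bound := fun _ => C2) (Metric.ball_mem_nhds _ one_pos)
      (Filter.Eventually.of_forall fun t => (hFg t ▸ (gmeas _).aestronglyMeasurable))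
      (hFg 0 ▸ gint _)
      (((measurable_pi_apply i).comp hP).mul
        (Real.measurable_exp.comp (((mdot hstar).sub (mnorm.pow_const 2)).add
          (measurable_const.mul ((measurable_pi_apply i).comp hP))))).aestronglyMeasurable
      (Filter.Eventually.of_forall fun ω => fun t ht => hbd ω t ht)
      (integrable_const _)
      (Filter.Eventually.of_forall fun ω => fun t ht => hdiff ω t ht)
    obtain ⟨hint0, hderiv0⟩ := hres
    -- identify Fc' 0 with the target integrand
    have hFc'0 : Fc' 0 = fun ω => P ω i * Real.exp (dotp hstar (P ω) - ‖P ω‖^2) := by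
      funext ω; simp [hFc'def]
    -- the first (price) term and its derivative
    have h1 : HasDerivAt (fun t : ℝ => Real.exp (-(dotp hstar p) - t * p i))
        (Real.exp (-(dotp hstar p) - 0 * p i) * (-(1 * p i))) 0 := by
      exact (((hasDerivAt_id (0:ℝ)).mul_const (p i)).const_sub (-(dotp hstar p))).exp
    -- the slice function
    set φ : ℝ → ℝ := fun t => f (hstar + t • (Pi.single i 1 : Fin n → ℝ)) with hφdef
    have hφeq : φ = fun t => Real.exp (-(dotp hstar p) - t * p i) + ∫ ω, Fc t ω ∂μ := by
      funext t
      have e1 : -(dotp (hstar + t • (Pi.single i 1 : Fin n → ℝ)) p) =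
          -(dotp hstar p) - t * p i := by
        rw [dotp_add_left, dotp_smul_left, dotp_single]; ring
      show Real.exp (-(dotp (hstar + t • (Pi.single i 1 : Fin n → ℝ)) p)) +
          ∫ ω, g (hstar + t • (Pi.single i 1 : Fin n → ℝ)) ω ∂μ = _
      rw [e1, hFg t]
    have hφderiv : HasDerivAt φ
        (Real.exp (-(dotp hstar p) - 0 * p i) * (-(1 * p i)) + ∫ ω, Fc' 0 ω ∂μ) 0 := by
      rw [hφeq]; exact h1.add hderiv0
    have hφmin : IsLocalMin φ 0 := by
      apply Filter.Eventually.of_forall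
      intro t
      have : φ 0 = f hstar := by rw [hφdef]; simp
      rw [this]; exact hglobal _
    have hzero := hφmin.hasDerivAt_eq_zero hφderiv
    constructor
    · rw [← hFc'0]; exact hint0
    · rw [← hFc'0]
      have : ∫ ω, Fc' 0 ω ∂μ = Real.exp (-(dotp hstar p) - 0 * p i) * (1 * p i) := by
        linarith [hzero]
      rw [this]; simp [mul_comm]
  -- assemble the deflator
  set c : ℝ := dotp hstar p with hcdef
  refine ⟨fun ω => Real.exp (c + (dotp hstar (P ω) - ‖P ω‖^2)), ?_, ?_, ?_, ?_, ?_⟩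
  · exact Real.measurable_exp.comp
      (measurable_const.add ((mdot hstar).sub (mnorm.pow_const 2)))
  · refine ⟨Real.exp (c + (n*‖hstar‖)^2/4), fun ω => ?_⟩
    rw [abs_of_pos (Real.exp_pos _)]
    apply Real.exp_le_exp.2
    have h1 := dotp_le hstar (P ω)
    have h2 := quad_bound (n*‖hstar‖) ‖P ω‖
    linarith
  · exact Filter.Eventually.of_forall fun ω => Real.exp_pos _
  · intro i
    have e : (fun ω => P ω i * Real.exp (c + (dotp hstar (P ω) - ‖P ω‖^2))) =
        fun ω => Real.exp c * (P ω i * Real.exp (dotp hstar (P ω) - ‖P ω‖^2)) := by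
      funext ω; rw [Real.exp_add]; ring
    rw [e]
    exact ((hkey i).1).const_mul _
  · intro i
    have e : (fun ω => P ω i * Real.exp (c + (dotp hstar (P ω) - ‖P ω‖^2))) =
        fun ω => Real.exp c * (P ω i * Real.exp (dotp hstar (P ω) - ‖P ω‖^2)) := by
      funext ω; rw [Real.exp_add]; ring
    rw [e, integral_const_mul, (hkey i).2]
    rw [Real.exp_neg]
    field_simp
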